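/- Let n ≥ 2 and 1 ≤ m ≤ n. The function λ ↦ E_m(λ)^{1/m} is concave on the open positive cone Γ₊, where E_m(λ) = ∑_{1 ≤ i₁ < ⋯ < i_m ≤ n} λ_{i₁}⋯λ_{i_m} is the m-th elementary symmetric function. -/

import Mathlib

open Finset

noncomputable def esy {n : ℕ} (A : Finset (Fin n)) (r : ℕ) (x : Fin n → ℝ) : ℝ :=
  ∑ s ∈ A.powersetCard r, ∏ i ∈ s, x i

lemma esy_zero {n : ℕ} (A : Finset (Fin n)) (x : Fin n → ℝ) : esy A 0 x = 1 := by
  simp [esy]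

lemma esy_pos {n : ℕ} {A : Finset (Fin n)} {r : ℕ} {x : Fin n → ℝ}
    (hr : r ≤ A.card) (hx : ∀ i ∈ A, 0 < x i) : 0 < esy A r x := by
  refine Finset.sum_pos (fun s hs => ?_) (Finset.powersetCard_nonempty.2 hr)
  obtain ⟨hsub, -⟩ := Finset.mem_powersetCard.1 hs
  exact Finset.prod_pos fun i hi => hx i (hsub hi)

lemma esy_erase {n : ℕ} {A : Finset (Fin n)} {i : Fin n} (hi : i ∈ A) (r : ℕ) (x : Fin n → ℝ) :
    esy A (r+1) x = esy (A.erase i) (r+1) x + x i * esy (A.erase i) r x := by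
  conv_lhs => rw [esy, ← Finset.insert_erase hi,
    Finset.powersetCard_succ_insert (Finset.notMem_erase i A)]
  rw [Finset.sum_union, Finset.sum_image]
  · congr 1
    rw [esy, Finset.mul_sum]
    refine Finset.sum_congr rfl fun s hs => ?_
    rw [Finset.prod_insert]
    exact fun h => (Finset.mem_erase.1 ((Finset.mem_powersetCard.1 hs).1 h)).1 rfl
  · intro s hs t ht hst
    have hi1 : i ∉ s := fun h => (Finset.mem_erase.1 ((Finset.mem_powersetCard.1 hs).1 h)).1 rfl
    have hi2 : i ∉ t := fun h => (Finset.mem_erase.1 ((Finset.mem_powersetCard.1 ht).1 h)).1 rfl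
    exact (Finset.insert_erase_invOn.2.injOn (by simpa) (by simpa)) hst
  · rw [Finset.disjoint_right]
    rintro s hs hs'
    obtain ⟨t, ht, rfl⟩ := Finset.mem_image.1 hs
    exact (Finset.mem_erase.1 ((Finset.mem_powersetCard.1 hs').1 (Finset.mem_insert_self i t))).1 rfl

lemma esy_sum {n : ℕ} (A : Finset (Fin n)) (r : ℕ) (x : Fin n → ℝ) :
    ∑ i ∈ A, x i * esy (A.erase i) r x = (r+1 : ℝ) * esy A (r+1) x := by
  have h1 : ∀ i ∈ A, x i * esy (A.erase i) r x
      = ∑ s ∈ (A.erase i).powersetCard r, ∏ j ∈ insert i s, x j := by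
    intro i hi
    rw [esy, Finset.mul_sum]
    refine Finset.sum_congr rfl fun s hs => ?_
    rw [Finset.prod_insert]
    exact fun h => (Finset.mem_erase.1 ((Finset.mem_powersetCard.1 hs).1 h)).1 rfl
  rw [Finset.sum_congr rfl h1, Finset.sum_sigma']
  have h2 : (r+1:ℝ) * esy A (r+1) x = ∑ s ∈ A.powersetCard (r+1), ∑ i ∈ s, ∏ j ∈ s, x j := by
    rw [esy, Finset.mul_sum]
    refine Finset.sum_congr rfl fun s hs => ?_
    rw [Finset.sum_const, (Finset.mem_powersetCard.1 hs).2]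
    push_cast
    ring
  rw [h2, Finset.sum_sigma']
  refine Finset.sum_nbij' (i := fun p => ⟨insert p.1 p.2, p.1⟩)
    (j := fun p => ⟨p.2, p.1.erase p.2⟩) ?_ ?_ ?_ ?_ ?_
  · rintro ⟨i, s⟩ hp
    simp only [Finset.mem_sigma, Finset.mem_powersetCard] at hp ⊢
    obtain ⟨hiA, hsub, hcard⟩ := hp
    have hi : i ∉ s := fun h => (Finset.mem_erase.1 (hsub h)).1 rfl
    refine ⟨⟨?_, ?_⟩, Finset.mem_insert_self _ _⟩
    · exact Finset.insert_subset hiA ((hsub.trans (Finset.erase_subset _ _)))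
    · rw [Finset.card_insert_of_notMem hi, hcard]
  · rintro ⟨s, i⟩ hp
    simp only [Finset.mem_sigma, Finset.mem_powersetCard] at hp ⊢
    obtain ⟨⟨hsub, hcard⟩, his⟩ := hp
    refine ⟨hsub his, ?_, ?_⟩
    · intro j hj
      obtain ⟨hji, hjs⟩ := Finset.mem_erase.1 hj
      exact Finset.mem_erase.2 ⟨hji, hsub hjs⟩
    · rw [Finset.card_erase_of_mem his, hcard]
      rfl
  · rintro ⟨i, s⟩ hp
    simp only [Finset.mem_sigma, Finset.mem_powersetCard] at hp
    have hi : i ∉ s := fun h => (Finset.mem_erase.1 (hp.2.1 h)).1 rfl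
    simp [Finset.erase_insert hi]
  · rintro ⟨s, i⟩ hp
    simp only [Finset.mem_sigma, Finset.mem_powersetCard] at hp
    simp [Finset.insert_erase hp.2]
  · rintro ⟨i, s⟩ hp
    simp only [Finset.mem_sigma, Finset.mem_powersetCard] at hp
    rfl

-- harmonic-type function h a b = a*b/(a+b)
lemma hfun_mono {a b b' : ℝ} (ha : 0 < a) (hb : 0 < b) (hbb : b ≤ b') :
    a * b / (a + b) ≤ a * b' / (a + b') := by
  have hb' : 0 < b' := lt_of_lt_of_le hb hbb
  rw [div_le_div_iff₀ (by linarith) (by linarith)]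
  nlinarith [mul_le_mul_of_nonneg_left hbb (mul_pos ha ha).le]

lemma hfun_super {a b c d : ℝ} (ha : 0 < a) (hb : 0 < b) (hc : 0 < c) (hd : 0 < d) :
    a * b / (a + b) + c * d / (c + d) ≤ (a + c) * (b + d) / (a + c + (b + d)) := by
  rw [div_add_div _ _ (by linarith) (by linarith), div_le_div_iff₀ (by positivity) (by linarith)]
  nlinarith [sq_nonneg (a*d - b*c), mul_pos ha hb, mul_pos hc hd, mul_pos ha hd, mul_pos hb hc]

lemma esy_one {n : ℕ} (A : Finset (Fin n)) (z : Fin n → ℝ) : esy A 1 z = ∑ i ∈ A, z i := by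
  simpa [esy_zero] using (esy_sum A 0 z).symm

lemma esy_ratio_formula {n : ℕ} {A : Finset (Fin n)} {m : ℕ} (hm : m + 2 ≤ A.card)
    {x : Fin n → ℝ} (hx : ∀ i ∈ A, 0 < x i) :
    esy A (m+2) x / esy A (m+1) x
      = (1/(m+2 : ℝ)) * ∑ i ∈ A, (x i * (esy (A.erase i) (m+1) x / esy (A.erase i) m x)) /
          (x i + esy (A.erase i) (m+1) x / esy (A.erase i) m x) := by
  have hcard : ∀ i ∈ A, m + 1 ≤ (A.erase i).card := by
    intro i hi; rw [Finset.card_erase_of_mem hi]; omega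
  have hxe : ∀ i ∈ A, ∀ j ∈ A.erase i, 0 < x j := fun i hi j hj => hx j (Finset.mem_erase.1 hj).2
  have hterm : ∀ i ∈ A,
      (x i * (esy (A.erase i) (m+1) x / esy (A.erase i) m x)) /
        (x i + esy (A.erase i) (m+1) x / esy (A.erase i) m x)
      = x i * esy (A.erase i) (m+1) x / esy A (m+1) x := by
    intro i hi
    have hQ : 0 < esy (A.erase i) m x := esy_pos (by have := hcard i hi; omega) (hxe i hi)
    have hP : 0 < esy (A.erase i) (m+1) x := esy_pos (hcard i hi) (hxe i hi)
    have hxi := hx i hi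
    rw [esy_erase hi m x]
    rw [div_eq_div_iff (by positivity) (by positivity)]
    field_simp
    ring
  rw [Finset.sum_congr rfl hterm, ← Finset.sum_div, esy_sum A (m+1) x]
  have hE : 0 < esy A (m+1) x := esy_pos (by omega) hx
  push_cast
  field_simp
  ring

lemma ratio_superadd : ∀ (m : ℕ) {n : ℕ} (A : Finset (Fin n)), m + 1 ≤ A.card →
    ∀ (x y : Fin n → ℝ), (∀ i ∈ A, 0 < x i) → (∀ i ∈ A, 0 < y i) →
    esy A (m+1) x / esy A m x + esy A (m+1) y / esy A m y
      ≤ esy A (m+1) (x+y) / esy A m (x+y) := by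
  intro m
  induction m with
  | zero =>
    intro n A hA x y hx hy
    simp [esy_zero, esy_one, Finset.sum_add_distrib]
  | succ m ih =>
    intro n A hA x y hx hy
    have hxy : ∀ i ∈ A, 0 < (x + y) i := fun i hi => add_pos (hx i hi) (hy i hi)
    rw [esy_ratio_formula hA hx, esy_ratio_formula hA hy, esy_ratio_formula hA hxy, ← mul_add]
    have hc : (0:ℝ) ≤ 1/(m+2 : ℝ) := by positivity
    refine mul_le_mul_of_nonneg_left ?_ hc
    rw [← Finset.sum_add_distrib]
    refine Finset.sum_le_sum fun i hi => ?_
    have hcard : m + 1 ≤ (A.erase i).card := by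
      rw [Finset.card_erase_of_mem hi]; omega
    have hxe : ∀ j ∈ A.erase i, 0 < x j := fun j hj => hx j (Finset.mem_erase.1 hj).2
    have hye : ∀ j ∈ A.erase i, 0 < y j := fun j hj => hy j (Finset.mem_erase.1 hj).2
    have hFx : 0 < esy (A.erase i) (m+1) x / esy (A.erase i) m x :=
      div_pos (esy_pos hcard hxe) (esy_pos (by omega) hxe)
    have hFy : 0 < esy (A.erase i) (m+1) y / esy (A.erase i) m y :=
      div_pos (esy_pos hcard hye) (esy_pos (by omega) hye)
    have hih := ih (A.erase i) hcard x y hxe hye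
    calc x i * (esy (A.erase i) (m+1) x / esy (A.erase i) m x) /
            (x i + esy (A.erase i) (m+1) x / esy (A.erase i) m x)
          + y i * (esy (A.erase i) (m+1) y / esy (A.erase i) m y) /
            (y i + esy (A.erase i) (m+1) y / esy (A.erase i) m y)
        ≤ (x i + y i) * (esy (A.erase i) (m+1) x / esy (A.erase i) m x
              + esy (A.erase i) (m+1) y / esy (A.erase i) m y) /
            (x i + y i + (esy (A.erase i) (m+1) x / esy (A.erase i) m x
              + esy (A.erase i) (m+1) y / esy (A.erase i) m y)) :=
          hfun_super (hx i hi) hFx (hy i hi) hFy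
      _ ≤ (x i + y i) * (esy (A.erase i) (m+1) (x+y) / esy (A.erase i) m (x+y)) /
            (x i + y i + esy (A.erase i) (m+1) (x+y) / esy (A.erase i) m (x+y)) :=
          hfun_mono (add_pos (hx i hi) (hy i hi)) (add_pos hFx hFy) hih
      _ = (x+y) i * (esy (A.erase i) (m+1) (x+y) / esy (A.erase i) m (x+y)) /
            ((x+y) i + esy (A.erase i) (m+1) (x+y) / esy (A.erase i) m (x+y)) := by
          simp [Pi.add_apply]

lemma esy_prod {n : ℕ} (A : Finset (Fin n)) {x : Fin n → ℝ} (hx : ∀ i ∈ A, 0 < x i) :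
    ∀ m, m ≤ A.card → esy A m x = ∏ k ∈ Finset.range m, (esy A (k+1) x / esy A k x) := by
  intro m
  induction m with
  | zero => simp [esy_zero]
  | succ m ih =>
    intro hm
    rw [Finset.prod_range_succ, ← ih (by omega)]
    have h0 : esy A m x ≠ 0 := ne_of_gt (esy_pos (by omega) hx)
    field_simp

lemma root_superadd {n : ℕ} {A : Finset (Fin n)} {m : ℕ} (hm1 : 1 ≤ m) (hm : m ≤ A.card)
    {x y : Fin n → ℝ} (hx : ∀ i ∈ A, 0 < x i) (hy : ∀ i ∈ A, 0 < y i) :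
    esy A m x ^ ((1:ℝ)/m) + esy A m y ^ ((1:ℝ)/m) ≤ esy A m (x+y) ^ ((1:ℝ)/m) := by
  have hxy : ∀ i ∈ A, 0 < (x+y) i := fun i hi => add_pos (hx i hi) (hy i hi)
  have hPx : 0 < esy A m x := esy_pos hm hx
  have hPy : 0 < esy A m y := esy_pos hm hy
  have hP : 0 < esy A m (x+y) := esy_pos hm hxy
  set w : ℝ := (1:ℝ)/m with hw
  have hw0 : 0 ≤ w := by positivity
  have hm0 : (m:ℝ) ≠ 0 := Nat.cast_ne_zero.2 (by omega)
  have hwsum : ∑ _k ∈ Finset.range m, w = 1 := by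
    rw [Finset.sum_const, Finset.card_range, nsmul_eq_mul, hw]
    field_simp
  have Fpos : ∀ z, (∀ i ∈ A, 0 < z i) → ∀ k ∈ Finset.range m,
      0 < esy A (k+1) z / esy A k z := by
    intro z hz k hk
    have hk' : k + 1 ≤ A.card := le_trans (Finset.mem_range.1 hk) hm
    exact div_pos (esy_pos hk' hz) (esy_pos (by omega) hz)
  have hr : ∀ z, (∀ i ∈ A, 0 < z i) → esy A m z / esy A m (x+y)
      = ∏ k ∈ Finset.range m,
          ((esy A (k+1) z / esy A k z) / (esy A (k+1) (x+y) / esy A k (x+y))) := by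
    intro z hz
    rw [esy_prod A hz m hm, esy_prod A hxy m hm, ← Finset.prod_div_distrib]
  have key : ∀ z, (∀ i ∈ A, 0 < z i) → (esy A m z / esy A m (x+y)) ^ w
      ≤ ∑ k ∈ Finset.range m,
          w * ((esy A (k+1) z / esy A k z) / (esy A (k+1) (x+y) / esy A k (x+y))) := by
    intro z hz
    rw [hr z hz, ← Real.finset_prod_rpow _ _
      (fun k hk => (div_pos (Fpos z hz k hk) (Fpos _ hxy k hk)).le) w]
    exact Real.geom_mean_le_arith_mean_weighted _ (fun _ => w) _ (fun _ _ => hw0) hwsum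
      (fun k hk => (div_pos (Fpos z hz k hk) (Fpos _ hxy k hk)).le)
  have hsum1 : (esy A m x / esy A m (x+y)) ^ w + (esy A m y / esy A m (x+y)) ^ w ≤ 1 := by
    calc (esy A m x / esy A m (x+y)) ^ w + (esy A m y / esy A m (x+y)) ^ w
        ≤ ∑ k ∈ Finset.range m, w * ((esy A (k+1) x / esy A k x
              + esy A (k+1) y / esy A k y) / (esy A (k+1) (x+y) / esy A k (x+y))) := by
          have h1 := key x hx
          have h2 := key y hy
          calc _ ≤ _ := add_le_add h1 h2
            _ = _ := by
              rw [← Finset.sum_add_distrib]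
              exact Finset.sum_congr rfl fun k hk => by rw [← mul_add, ← add_div]
      _ ≤ ∑ k ∈ Finset.range m, w * 1 := by
          refine Finset.sum_le_sum fun k hk => ?_
          refine mul_le_mul_of_nonneg_left ?_ hw0
          rw [div_le_one (Fpos _ hxy k hk)]
          exact ratio_superadd k A (le_trans (Finset.mem_range.1 hk) hm) x y hx hy
      _ = 1 := by simpa using hwsum
  have hdiv : ∀ z, 0 < esy A m z → (esy A m z / esy A m (x+y)) ^ w
      = esy A m z ^ w / esy A m (x+y) ^ w := fun z hz => Real.div_rpow hz.le hP.le _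
  rw [hdiv x hPx, hdiv y hPy, ← add_div, div_le_one (by positivity)] at hsum1
  exact hsum1

lemma esy_smul {n : ℕ} (A : Finset (Fin n)) (m : ℕ) (t : ℝ) (x : Fin n → ℝ) :
    esy A m (t • x) = t ^ m * esy A m x := by
  rw [esy, esy, Finset.mul_sum]
  refine Finset.sum_congr rfl fun s hs => ?_
  rw [← (Finset.mem_powersetCard.1 hs).2, ← Finset.prod_const, ← Finset.prod_mul_distrib]
  rfl

/-- The open positive cone Γ₊ = {λ ∈ ℝⁿ : λᵢ > 0 for all i}. -/
def posCone (n : ℕ) : Set (Fin n → ℝ) := {x | ∀ i, 0 < x i}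

/-- The m-th elementary symmetric function E_m(λ) = ∑_{i₁<⋯<i_m} λ_{i₁}⋯λ_{i_m}. -/
def elemSymm (n m : ℕ) (lam : Fin n → ℝ) : ℝ :=
  ∑ s ∈ Finset.powersetCard m (Finset.univ : Finset (Fin n)), ∏ i ∈ s, lam i

lemma esy_univ {n m : ℕ} (x : Fin n → ℝ) :
    esy (Finset.univ : Finset (Fin n)) m x = elemSymm n m x := rfl

/-- Lemma 2.7 (i): the m-th root E_m^{1/m} is concave on the positive cone. -/
theorem stmt_7 (n m : ℕ) (hn : 2 ≤ n) (hm1 : 1 ≤ m) (hmn : m ≤ n) :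
    ConcaveOn ℝ (posCone n) (fun lam => (elemSymm n m lam) ^ ((1 : ℝ) / m)) := by
  have hcard : m ≤ (Finset.univ : Finset (Fin n)).card := by simpa using hmn
  have hm0 : (m:ℝ) ≠ 0 := Nat.cast_ne_zero.2 (by omega)
  have hpow : ∀ (t : ℝ), 0 < t → ∀ z : Fin n → ℝ, (∀ i, 0 < z i) →
      elemSymm n m (t • z) ^ ((1:ℝ)/m) = t * elemSymm n m z ^ ((1:ℝ)/m) := by
    intro t ht z hz
    have hE : 0 < elemSymm n m z := esy_pos hcard (fun i _ => hz i)
    rw [show elemSymm n m (t • z) = t ^ m * elemSymm n m z from esy_smul Finset.univ m t z,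
      Real.mul_rpow (by positivity) hE.le, ← Real.rpow_natCast t m, ← Real.rpow_mul ht.le,
      mul_one_div_cancel hm0, Real.rpow_one]
  constructor
  · intro x hx y hy a b ha hb hab i
    simp only [Pi.add_apply, Pi.smul_apply, smul_eq_mul]
    rcases ha.eq_or_lt with h|h
    · have hb1 : b = 1 := by linarith
      rw [← h, hb1]
      simpa using hy i
    · have h2 : 0 ≤ b * y i := mul_nonneg hb (hy i).le
      nlinarith [hx i]
  · intro x hx y hy a b ha hb hab
    rcases ha.eq_or_lt with h|ha'
    · have hb1 : b = 1 := by linarith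
      rw [← h, hb1]
      simp
    rcases hb.eq_or_lt with h|hb'
    · have ha1 : a = 1 := by linarith
      rw [← h, ha1]
      simp
    have hax : ∀ i ∈ (Finset.univ : Finset (Fin n)), 0 < (a • x) i := fun i _ => by
      simpa [smul_eq_mul] using mul_pos ha' (hx i)
    have hby : ∀ i ∈ (Finset.univ : Finset (Fin n)), 0 < (b • y) i := fun i _ => by
      simpa [smul_eq_mul] using mul_pos hb' (hy i)
    have hkey := root_superadd hm1 hcard hax hby
    rw [esy_univ, esy_univ, esy_univ] at hkey
    rw [hpow a ha' x hx, hpow b hb' y hy] at hkey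
    simpa [smul_eq_mul] using hkey
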